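/- Let p be a prime with p > 5, let X ∈ SL(2, 𝔽_p), and let h be the order of the image of X in PSL₂(𝔽_p) (the quotient of SL(2, 𝔽_p) by its center). Then: (i) if h = 2 then tr(X) = 0; (ii) if h = 3 then tr(X) = 1 or tr(X) = −1; (iii) if h = 4 then tr(X)² = 2; (iv) if h = 5 then tr(X)⁴ − 3·tr(X)² + 1 = 0. -/
import Mathlib

lemma ch2 {R : Type*} [CommRing R] (M : Matrix (Fin 2) (Fin 2) R) (hdet : M.det = 1) :
    M ^ 2 = M.trace • M - 1 := by
  rw [Matrix.det_fin_two] at hdet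
  ext i j
  fin_cases i <;> fin_cases j <;>
    simp [pow_two, Matrix.mul_apply, Matrix.trace_fin_two, Fin.sum_univ_two, Matrix.one_apply] <;>
    first | linear_combination hdet | linear_combination -hdet | ring

lemma step {R : Type*} [CommRing R] {M : Matrix (Fin 2) (Fin 2) R}
    (h2 : M ^ 2 = M.trace • M - 1) {n : ℕ} {u v : R} (h : M ^ n = u • M + v • 1) :
    M ^ (n + 1) = (u * M.trace + v) • M + (-u) • 1 := by
  have h' : M ^ (n + 1) = u • M ^ 2 + v • M := by
    rw [pow_succ, h, add_mul, Matrix.smul_mul, Matrix.smul_mul, one_mul, ← sq]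
  rw [h', h2]
  module

lemma scalar_smul {p : ℕ} (r : ZMod p) :
    (Matrix.scalar (Fin 2)) r = r • (1 : Matrix (Fin 2) (Fin 2) (ZMod p)) := by
  ext i j
  simp [Matrix.scalar_apply, Matrix.one_apply, Matrix.diagonal]

lemma central_of {p : ℕ} [Fact p.Prime] {X : Matrix.SpecialLinearGroup (Fin 2) (ZMod p)}
    {c d : ZMod p} (hc : c ≠ 0)
    (heq : c • (X : Matrix (Fin 2) (Fin 2) (ZMod p)) = d • 1) :
    X ∈ Subgroup.center (Matrix.SpecialLinearGroup (Fin 2) (ZMod p)) := by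
  have hM : (X : Matrix (Fin 2) (Fin 2) (ZMod p)) = (c⁻¹ * d) • 1 := by
    rw [mul_smul, ← heq, smul_smul, inv_mul_cancel₀ hc, one_smul]
  refine Matrix.SpecialLinearGroup.mem_center_iff.mpr ⟨c⁻¹ * d, ?_, ?_⟩
  · have hdet : ((X : Matrix (Fin 2) (Fin 2) (ZMod p))).det = 1 := X.property
    rw [hM, Matrix.det_smul, Matrix.det_one] at hdet
    simpa using hdet
  · rw [hM, scalar_smul]

theorem order_trace (p : ℕ) (hp : p.Prime) (hp5 : 5 < p)
    (X : Matrix.SpecialLinearGroup (Fin 2) (ZMod p)) :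
    (orderOf ((QuotientGroup.mk X) :
        Matrix.SpecialLinearGroup (Fin 2) (ZMod p) ⧸
          Subgroup.center (Matrix.SpecialLinearGroup (Fin 2) (ZMod p))) = 2 →
      Matrix.trace (X : Matrix (Fin 2) (Fin 2) (ZMod p)) = 0) ∧
    (orderOf ((QuotientGroup.mk X) :
        Matrix.SpecialLinearGroup (Fin 2) (ZMod p) ⧸
          Subgroup.center (Matrix.SpecialLinearGroup (Fin 2) (ZMod p))) = 3 →
      Matrix.trace (X : Matrix (Fin 2) (Fin 2) (ZMod p)) = 1 ∨
        Matrix.trace (X : Matrix (Fin 2) (Fin 2) (ZMod p)) = -1) ∧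
    (orderOf ((QuotientGroup.mk X) :
        Matrix.SpecialLinearGroup (Fin 2) (ZMod p) ⧸
          Subgroup.center (Matrix.SpecialLinearGroup (Fin 2) (ZMod p))) = 4 →
      Matrix.trace (X : Matrix (Fin 2) (Fin 2) (ZMod p)) ^ 2 = 2) ∧
    (orderOf ((QuotientGroup.mk X) :
        Matrix.SpecialLinearGroup (Fin 2) (ZMod p) ⧸
          Subgroup.center (Matrix.SpecialLinearGroup (Fin 2) (ZMod p))) = 5 →
      Matrix.trace (X : Matrix (Fin 2) (Fin 2) (ZMod p)) ^ 4 -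
        3 * Matrix.trace (X : Matrix (Fin 2) (Fin 2) (ZMod p)) ^ 2 + 1 = 0) := by
  haveI := Fact.mk hp
  set M : Matrix (Fin 2) (Fin 2) (ZMod p) := (X : Matrix (Fin 2) (Fin 2) (ZMod p)) with hM
  set t : ZMod p := M.trace with htt
  have hdet : M.det = 1 := X.property
  have h2 := ch2 M hdet
  have e1 : M ^ 1 = (1 : ZMod p) • M + (0 : ZMod p) • 1 := by simp
  have E2 : M ^ 2 = t • M + (-1 : ZMod p) • 1 := by
    have h := step h2 e1; rw [show (1 : ℕ) + 1 = 2 from rfl] at h; rw [h]; module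
  have E3 : M ^ 3 = (t ^ 2 - 1) • M + (-t) • 1 := by
    have h := step h2 E2; rw [show (2 : ℕ) + 1 = 3 from rfl] at h; rw [h]; module
  have E4 : M ^ 4 = (t ^ 3 - 2 * t) • M + (-(t ^ 2 - 1)) • 1 := by
    have h := step h2 E3; rw [show (3 : ℕ) + 1 = 4 from rfl] at h; rw [h]; module
  have E5 : M ^ 5 = (t ^ 4 - 3 * t ^ 2 + 1) • M + (-(t ^ 3 - 2 * t)) • 1 := by
    have h := step h2 E4; rw [show (4 : ℕ) + 1 = 5 from rfl] at h; rw [h]; module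
  have key : ∀ h : ℕ, orderOf ((QuotientGroup.mk X) :
      Matrix.SpecialLinearGroup (Fin 2) (ZMod p) ⧸
        Subgroup.center (Matrix.SpecialLinearGroup (Fin 2) (ZMod p))) = h →
      ∃ r : ZMod p, M ^ h = r • 1 := by
    intro h hord
    have h1 := pow_orderOf_eq_one ((QuotientGroup.mk X) :
      Matrix.SpecialLinearGroup (Fin 2) (ZMod p) ⧸
        Subgroup.center (Matrix.SpecialLinearGroup (Fin 2) (ZMod p)))
    rw [hord, ← QuotientGroup.mk_pow] at h1
    have hc : X ^ h ∈ Subgroup.center (Matrix.SpecialLinearGroup (Fin 2) (ZMod p)) :=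
      (QuotientGroup.eq_one_iff _).mp h1
    obtain ⟨r, _, hrX⟩ := Matrix.SpecialLinearGroup.mem_center_iff.mp hc
    refine ⟨r, ?_⟩
    rw [hM, ← Matrix.SpecialLinearGroup.coe_pow, ← hrX, scalar_smul]
  have noncentral : ∀ {c d : ZMod p}, c ≠ 0 → c • M = d • 1 →
      ((QuotientGroup.mk X) :
      Matrix.SpecialLinearGroup (Fin 2) (ZMod p) ⧸
        Subgroup.center (Matrix.SpecialLinearGroup (Fin 2) (ZMod p))) = 1 := by
    intro c d hc heq
    exact (QuotientGroup.eq_one_iff X).mpr (central_of hc heq)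
  refine ⟨?_, ?_, ?_, ?_⟩ <;> intro hord
  · -- h = 2
    obtain ⟨r, hX⟩ := key 2 hord
    rw [E2] at hX
    have heq : t • M = (r + 1) • (1 : Matrix (Fin 2) (Fin 2) (ZMod p)) := by
      rw [eq_sub_of_add_eq hX]; module
    by_cases ht : t = 0
    · exact ht
    · rw [noncentral ht heq, orderOf_one] at hord; norm_num at hord
  · -- h = 3
    obtain ⟨r, hX⟩ := key 3 hord
    rw [E3] at hX
    have heq : (t ^ 2 - 1) • M = (r + t) • (1 : Matrix (Fin 2) (Fin 2) (ZMod p)) := by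
      rw [eq_sub_of_add_eq hX]; module
    by_cases hc : t ^ 2 - 1 = 0
    · have : (t - 1) * (t + 1) = 0 := by linear_combination hc
      rcases mul_eq_zero.mp this with h | h
      · left; linear_combination h
      · right; linear_combination h
    · rw [noncentral hc heq, orderOf_one] at hord; norm_num at hord
  · -- h = 4
    obtain ⟨r, hX⟩ := key 4 hord
    rw [E4] at hX
    have heq : (t ^ 3 - 2 * t) • M = (r + (t ^ 2 - 1)) • (1 : Matrix (Fin 2) (Fin 2) (ZMod p)) := by
      rw [eq_sub_of_add_eq hX]; module
    by_cases hc : t ^ 3 - 2 * t = 0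
    · have h0 : t * (t ^ 2 - 2) = 0 := by linear_combination hc
      rcases mul_eq_zero.mp h0 with h | h
      · exfalso
        have hM2 : M ^ 2 = (-1 : ZMod p) • (1 : Matrix (Fin 2) (Fin 2) (ZMod p)) := by
          rw [E2, h]; module
        have hcen : X ^ 2 ∈ Subgroup.center (Matrix.SpecialLinearGroup (Fin 2) (ZMod p)) := by
          refine Matrix.SpecialLinearGroup.mem_center_iff.mpr ⟨-1, by norm_num, ?_⟩
          rw [Matrix.SpecialLinearGroup.coe_pow, ← hM, hM2, scalar_smul]
        have hpow : ((QuotientGroup.mk X) :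
            Matrix.SpecialLinearGroup (Fin 2) (ZMod p) ⧸
              Subgroup.center (Matrix.SpecialLinearGroup (Fin 2) (ZMod p))) ^ 2 = 1 := by
          rw [← QuotientGroup.mk_pow]
          exact (QuotientGroup.eq_one_iff _).mpr hcen
        have hdvd := orderOf_dvd_of_pow_eq_one hpow
        rw [hord] at hdvd
        norm_num at hdvd
      · linear_combination h
    · rw [noncentral hc heq, orderOf_one] at hord; norm_num at hord
  · -- h = 5
    obtain ⟨r, hX⟩ := key 5 hord
    rw [E5] at hX
    have heq : (t ^ 4 - 3 * t ^ 2 + 1) • M =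
        (r + (t ^ 3 - 2 * t)) • (1 : Matrix (Fin 2) (Fin 2) (ZMod p)) := by
      rw [eq_sub_of_add_eq hX]; module
    by_cases hc : t ^ 4 - 3 * t ^ 2 + 1 = 0
    · exact hc
    · rw [noncentral hc heq, orderOf_one] at hord; norm_num at hord
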